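/- Fix an integer $N \ge 1$. Let $F$ be the free $\mathbb{Q}$-vector space on symbols $F^{l,m,k}$ indexed by triples of natural numbers with $l + m + k + 1 = N$, and let $I \subset F$ be the subspace spanned by all elements $F^{l,m,k} - F^{m,l,k}$ and all elements $F^{l,m+1,k} + F^{l+1,m,k} - F^{l,m,k+1}$ (for indices in range). Then the quotient space $F/I$ has dimension $\lceil N/2 \rceil$ over $\mathbb{Q}$. -/

import Mathlib

namespace Stmt9Aux

open Finset

/-- Pascal-style sum identity. -/
lemma pascal_sum {V : Type*} [AddCommGroup V] [Module ℚ V] (f : ℕ → V) (k : ℕ) :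
    ∑ j ∈ Finset.range (k+2), ((k+1).choose j : ℚ) • f j
      = ∑ j ∈ Finset.range (k+1), (k.choose j : ℚ) • f j
        + ∑ j ∈ Finset.range (k+1), (k.choose j : ℚ) • f (j+1) := by
  rw [Finset.sum_range_succ' (fun j => ((k+1).choose j : ℚ) • f j) (k+1)]
  have h1 : ∀ j ∈ Finset.range (k+1), ((k+1).choose (j+1) : ℚ) • f (j+1)
      = (k.choose j : ℚ) • f (j+1) + (k.choose (j+1) : ℚ) • f (j+1) := by
    intro j _
    rw [Nat.choose_succ_succ]
    push_cast
    rw [add_smul]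
  rw [Finset.sum_congr rfl h1, Finset.sum_add_distrib]
  have h3 : ∑ j ∈ Finset.range (k+1), (k.choose (j+1):ℚ) • f (j+1)
      = ∑ j ∈ Finset.range k, (k.choose (j+1):ℚ) • f (j+1) := by
    rw [Finset.sum_range_succ]; simp
  have h2 : ∑ j ∈ Finset.range k, (k.choose (j+1) : ℚ) • f (j+1)
      = ∑ j ∈ Finset.range (k+1), (k.choose j : ℚ) • f j - (k.choose 0 : ℚ) • f 0 := by
    rw [eq_sub_iff_add_eq, ← Finset.sum_range_succ' (fun j => (k.choose j : ℚ) • f j) k]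
  rw [h3, h2]
  simp
  abel

variable (N : ℕ)

noncomputable def b (a : ℕ) : Fin ((N+1)/2) → ℚ :=
  if ha : min a (N - 1 - a) < (N+1)/2 then Pi.single ⟨min a (N - 1 - a), ha⟩ 1 else 0

lemma b_symm {a : ℕ} (ha : a + 1 ≤ N) : b N a = b N (N - 1 - a) := by
  unfold b
  rw [show N - 1 - (N - 1 - a) = a by omega, min_comm]

lemma sumA {l m k : ℕ} (h : l + m + k + 1 = N) :
    ∑ j ∈ Finset.range (k+1), (k.choose j : ℚ) • b N (l+j)
      = ∑ j ∈ Finset.range (k+1), (k.choose j : ℚ) • b N (m+j) := by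
  rw [← Finset.sum_range_reflect (fun j => (k.choose j : ℚ) • b N (l+j)) (k+1)]
  refine Finset.sum_congr rfl fun j hj => ?_
  have hj' : j ≤ k := by simpa [Nat.lt_succ_iff] using hj
  rw [show k + 1 - 1 - j = k - j by omega, Nat.choose_symm hj']
  congr 1
  rw [b_symm N (a := l + (k - j)) (by omega), show N - 1 - (l + (k-j)) = m + j by omega]

end Stmt9Aux

namespace Stmt9Main
open Stmt9Aux

variable (N : ℕ)

abbrev Idx := {p : ℕ × ℕ × ℕ // p.1 + p.2.1 + p.2.2 + 1 = N}

noncomputable def g : Idx N → (Fin ((N+1)/2) → ℚ) :=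
  fun p => ∑ j ∈ Finset.range (p.1.2.2 + 1), (p.1.2.2.choose j : ℚ) • b N (p.1.1 + j)

noncomputable def φ : (Idx N →₀ ℚ) →ₗ[ℚ] (Fin ((N+1)/2) → ℚ) :=
  Finsupp.linearCombination ℚ (g N)

lemma φ_single {p : Idx N} : φ N (Finsupp.single p 1) = g N p := by
  simp [φ]

def relSet : Set (Idx N →₀ ℚ) :=
  { v : Idx N →₀ ℚ |
    (∃ (l m k : ℕ) (h : l + m + k + 1 = N) (h' : m + l + k + 1 = N),
      v = Finsupp.single ⟨(l, m, k), h⟩ 1 - Finsupp.single ⟨(m, l, k), h'⟩ 1) ∨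
    (∃ (l m k : ℕ) (h1 : l + (m + 1) + k + 1 = N)
        (h2 : (l + 1) + m + k + 1 = N) (h3 : l + m + (k + 1) + 1 = N),
      v = Finsupp.single ⟨(l, m + 1, k), h1⟩ 1
            + Finsupp.single ⟨(l + 1, m, k), h2⟩ 1
            - Finsupp.single ⟨(l, m, k + 1), h3⟩ 1) }

lemma hker : Submodule.span ℚ (relSet N) ≤ LinearMap.ker (φ N) := by
  rw [Submodule.span_le]
  rintro v (⟨l, m, k, h, h', rfl⟩ | ⟨l, m, k, h1, h2, h3, rfl⟩)
  · simp only [SetLike.mem_coe, LinearMap.mem_ker, map_sub, φ_single, sub_eq_zero]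
    exact sumA N h
  · simp only [SetLike.mem_coe, LinearMap.mem_ker, map_sub, map_add, φ_single,
      sub_eq_zero]
    show _ = g N ⟨(l, m, k+1), h3⟩
    unfold g
    simp only
    rw [pascal_sum (fun j => b N (l + j)) k]
    congr 1
    refine Finset.sum_congr rfl fun j _ => ?_
    rw [show l + 1 + j = l + (j + 1) by omega]

end Stmt9Main

theorem stmt9 (N : ℕ) (hN : 1 ≤ N) :
    Module.finrank ℚ
      ((({p : ℕ × ℕ × ℕ // p.1 + p.2.1 + p.2.2 + 1 = N} →₀ ℚ)) ⧸
        (Submodule.span ℚ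
          { v : {p : ℕ × ℕ × ℕ // p.1 + p.2.1 + p.2.2 + 1 = N} →₀ ℚ |
            (∃ (l m k : ℕ) (h : l + m + k + 1 = N) (h' : m + l + k + 1 = N),
              v = Finsupp.single ⟨(l, m, k), h⟩ 1 - Finsupp.single ⟨(m, l, k), h'⟩ 1) ∨
            (∃ (l m k : ℕ) (h1 : l + (m + 1) + k + 1 = N)
                (h2 : (l + 1) + m + k + 1 = N) (h3 : l + m + (k + 1) + 1 = N),
              v = Finsupp.single ⟨(l, m + 1, k), h1⟩ 1
                    + Finsupp.single ⟨(l + 1, m, k), h2⟩ 1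
                    - Finsupp.single ⟨(l, m, k + 1), h3⟩ 1) }))
      = (N + 1) / 2 := by
  classical
  set c := (N + 1) / 2 with hc
  set I : Submodule ℚ (Stmt9Main.Idx N →₀ ℚ) := Submodule.span ℚ (Stmt9Main.relSet N) with hI
  show Module.finrank ℚ ((Stmt9Main.Idx N →₀ ℚ) ⧸ I) = c
  set Q := (Stmt9Main.Idx N →₀ ℚ) ⧸ I
  -- the descended map
  set φbar : Q →ₗ[ℚ] (Fin c → ℚ) := I.liftQ (Stmt9Main.φ N) (Stmt9Main.hker N) with hφbar
  -- generators
  have hidx : ∀ i : Fin c, (i : ℕ) + (N - 1 - i) + 0 + 1 = N := by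
    intro i; have := i.2; omega
  set u : Fin c → Q := fun i =>
    Submodule.Quotient.mk (Finsupp.single (⟨((i : ℕ), N - 1 - i, 0), hidx i⟩ : Stmt9Main.Idx N) 1)
    with hu
  set ψ : (Fin c → ℚ) →ₗ[ℚ] Q := (Pi.basisFun ℚ (Fin c)).constr ℚ u with hψ
  -- base case for surjectivity
  have base : ∀ (l m : ℕ) (h : l + m + 0 + 1 = N), l ≤ m →
      (Submodule.Quotient.mk (Finsupp.single (⟨(l, m, 0), h⟩ : Stmt9Main.Idx N) 1) : Q)
        ∈ LinearMap.range ψ := by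
    intro l m h hlm
    have hl : l < c := by omega
    have hm : m = N - 1 - l := by omega
    subst hm
    have : (⟨(l, N - 1 - l, 0), h⟩ : Stmt9Main.Idx N) = ⟨(((⟨l, hl⟩ : Fin c) : ℕ),
        N - 1 - ((⟨l, hl⟩ : Fin c) : ℕ), 0), hidx ⟨l, hl⟩⟩ := rfl
    rw [this]
    exact LinearMap.mem_range.2 ⟨Pi.basisFun ℚ (Fin c) ⟨l, hl⟩, (Pi.basisFun ℚ (Fin c)).constr_basis ℚ u ⟨l, hl⟩⟩
  have key : ∀ (k l m : ℕ) (h : l + m + k + 1 = N),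
      (Submodule.Quotient.mk (Finsupp.single (⟨(l, m, k), h⟩ : Stmt9Main.Idx N) 1) : Q)
        ∈ LinearMap.range ψ := by
    intro k
    induction k with
    | zero =>
      intro l m h
      rcases le_or_gt l m with hlm | hlm
      · exact base l m h hlm
      · have h' : m + l + 0 + 1 = N := by omega
        have hrel : Finsupp.single (⟨(l, m, 0), h⟩ : Stmt9Main.Idx N) 1
            - Finsupp.single (⟨(m, l, 0), h'⟩ : Stmt9Main.Idx N) 1 ∈ I :=
          Submodule.subset_span (Or.inl ⟨l, m, 0, h, h', rfl⟩)
        have heq : (Submodule.Quotient.mk (Finsupp.single (⟨(l, m, 0), h⟩ : Stmt9Main.Idx N) 1) : Q)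
            = Submodule.Quotient.mk (Finsupp.single (⟨(m, l, 0), h'⟩ : Stmt9Main.Idx N) 1) :=
          (Submodule.Quotient.eq I).2 hrel
        rw [heq]
        exact base m l h' (by omega)
    | succ k ih =>
      intro l m h
      have h1 : l + (m + 1) + k + 1 = N := by omega
      have h2 : (l + 1) + m + k + 1 = N := by omega
      have hrel : Finsupp.single (⟨(l, m + 1, k), h1⟩ : Stmt9Main.Idx N) 1
            + Finsupp.single (⟨(l + 1, m, k), h2⟩ : Stmt9Main.Idx N) 1
            - Finsupp.single (⟨(l, m, k + 1), h⟩ : Stmt9Main.Idx N) 1 ∈ I :=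
        Submodule.subset_span (Or.inr ⟨l, m, k, h1, h2, h, rfl⟩)
      have heq : (Submodule.Quotient.mk
            (Finsupp.single (⟨(l, m, k + 1), h⟩ : Stmt9Main.Idx N) 1) : Q)
          = Submodule.Quotient.mk (Finsupp.single (⟨(l, m + 1, k), h1⟩ : Stmt9Main.Idx N) 1)
            + Submodule.Quotient.mk (Finsupp.single (⟨(l + 1, m, k), h2⟩ : Stmt9Main.Idx N) 1) := by
        rw [← Submodule.Quotient.mk_add]
        refine (Submodule.Quotient.eq I).2 ?_
        have := neg_mem hrel
        simpa [neg_sub] using this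
      rw [heq]
      exact add_mem (ih l (m + 1) h1) (ih (l + 1) m h2)
  have hsurj : Function.Surjective ψ := by
    rw [← LinearMap.range_eq_top, eq_top_iff]
    rintro x -
    obtain ⟨y, rfl⟩ := Submodule.Quotient.mk_surjective I x
    induction y using Finsupp.induction_linear with
    | zero => rw [Submodule.Quotient.mk_zero]; exact zero_mem (LinearMap.range ψ)
    | add f g hf hg => rw [Submodule.Quotient.mk_add]; exact add_mem hf hg
    | single a q =>
      obtain ⟨⟨l, m, k⟩, h⟩ := a
      have : Finsupp.single (⟨(l, m, k), h⟩ : Stmt9Main.Idx N) q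
          = q • Finsupp.single (⟨(l, m, k), h⟩ : Stmt9Main.Idx N) (1 : ℚ) := by
        simp [Finsupp.smul_single]
      rw [this, Submodule.Quotient.mk_smul]
      exact Submodule.smul_mem _ q (key k l m h)
  have hcomp : ∀ i, φbar (ψ ((Pi.basisFun ℚ (Fin c)) i)) = (Pi.basisFun ℚ (Fin c)) i := by
    intro i
    rw [hψ, Module.Basis.constr_basis, hu]
    simp only
    rw [hφbar]
    rw [Submodule.liftQ_apply, Stmt9Main.φ_single]
    have hi := i.2
    have h2i : 2 * (i : ℕ) ≤ N - 1 := by omega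
    show (∑ j ∈ Finset.range (0 + 1), ((0 : ℕ).choose j : ℚ) • Stmt9Aux.b N ((i : ℕ) + j)) = _
    rw [Finset.sum_range_one]
    simp only [Nat.choose_zero_right, Nat.cast_one, one_smul, Nat.add_zero]
    unfold Stmt9Aux.b
    have hmin : min (i : ℕ) (N - 1 - i) = (i : ℕ) := by omega
    rw [dif_pos (by omega)]
    rw [Pi.basisFun_apply]
    exact congrArg (fun t : Fin c => Pi.single t (1 : ℚ)) (Fin.ext hmin)
  have hinj : Function.Injective ψ := by
    have hid : φbar.comp ψ = LinearMap.id := by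
      apply (Pi.basisFun ℚ (Fin c)).ext
      intro i
      simpa using hcomp i
    intro a b hab
    have : φbar (ψ a) = φbar (ψ b) := by rw [hab]
    rwa [← LinearMap.comp_apply, ← LinearMap.comp_apply, hid, LinearMap.id_apply,
      LinearMap.id_apply] at this
  have e : (Fin c → ℚ) ≃ₗ[ℚ] Q := LinearEquiv.ofBijective ψ ⟨hinj, hsurj⟩
  rw [← e.finrank_eq, Module.finrank_fin_fun]
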